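/- Let s ≥ 1 be an integer, let k be a squarefree positive integer, and let m, n be coprime positive integers. Then μ(k)·c_k^{(s)}(mn) = (μ(k)·c_k^{(s)}(m)) · (μ(k)·c_k^{(s)}(n)), where μ is the Möbius function. In other words, the function n ↦ μ(k)·c_k^{(s)}(n) is multiplicative in n when k is squarefree. -/

import Mathlib

open scoped BigOperators
open ArithmeticFunction
open scoped ArithmeticFunction.Moebius

/-- Generalized gcd `(a,b)_s`: the largest `d ^ s` (with `d` a positive integer)
dividing both `a` and `b`. -/
def ggcd (s a b : ℕ) : ℕ :=
  (Nat.findGreatest (fun d => d ^ s ∣ a ∧ d ^ s ∣ b) (max a b)) ^ s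

/-- The Cohen–Ramanujan sum `c_k^{(s)}(n) = Σ_{h=1, (h,k^s)_s=1}^{k^s} e^{2πinh/k^s}`. -/
noncomputable def CRS (s k n : ℕ) : ℂ :=
  ∑ h ∈ Finset.Icc 1 (k ^ s),
    if ggcd s h (k ^ s) = 1 then
      Complex.exp (2 * Real.pi * Complex.I * n * h / (k ^ s))
    else 0

/-- The core of `k`: its largest squarefree divisor. -/
def core (k : ℕ) : ℕ := ∏ p ∈ k.primeFactors, p

/-- `k* = k / k̄`. -/
def spart (k : ℕ) : ℕ := k / core k

/-- `ξ_d(k) = d` if `d ∣ k`, and `0` otherwise. -/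
def xi (d k : ℕ) : ℕ := if d ∣ k then d else 0

/-- Klee's function `Φ_s(n) = n ∏_{p prime, p^s ∣ n} (1 - 1/p^s)`. -/
noncomputable def Klee (s n : ℕ) : ℂ :=
  n * ∏ p ∈ n.primeFactors.filter (fun p => p ^ s ∣ n), (1 - 1 / (p : ℂ) ^ s)

/-- The Jordan totient function `J_s(n) = n^s ∏_{p ∣ n} (1 - 1/p^s)` (as a complex number). -/
noncomputable def Jordan (s n : ℕ) : ℂ :=
  (n : ℂ) ^ s * ∏ p ∈ n.primeFactors, (1 - 1 / (p : ℂ) ^ s)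

lemma geom_sum_exp (M n : ℕ) (hM : 0 < M) :
    ∑ j ∈ Finset.Icc 1 M, Complex.exp (2 * Real.pi * Complex.I * n * j / M)
      = if M ∣ n then (M : ℂ) else 0 := by
  have hM0 : (M : ℂ) ≠ 0 := Nat.cast_ne_zero.mpr hM.ne'
  set z : ℂ := 2 * Real.pi * Complex.I * n / M with hz
  have hterm : ∀ j : ℕ, Complex.exp (2 * Real.pi * Complex.I * n * j / M)
      = Complex.exp z ^ j := by
    intro j
    rw [← Complex.exp_nat_mul]
    congr 1
    rw [hz]
    ring
  by_cases hd : M ∣ n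
  · have hζ : Complex.exp z = 1 := by
      obtain ⟨c, rfl⟩ := hd
      have : z = c * (2 * Real.pi * Complex.I) := by
        rw [hz, div_eq_iff hM0]; push_cast; ring
      rw [this]
      exact Complex.exp_nat_mul_two_pi_mul_I c
    simp [hterm, hζ, hd]
  · have hζ : Complex.exp z ≠ 1 := by
      intro h1
      rw [Complex.exp_eq_one_iff] at h1
      obtain ⟨c, hc⟩ := h1
      rw [hz] at hc
      have h2 : (2 : ℂ) * Real.pi * Complex.I ≠ 0 := by
        simp [Real.pi_ne_zero, Complex.I_ne_zero]
      have hc' : 2 * (Real.pi:ℂ) * Complex.I * n = c * (2 * Real.pi * Complex.I) * M := by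
        rw [div_eq_iff hM0] at hc
        linear_combination hc
      have hnc : (n : ℂ) = c * M := by
        apply mul_left_cancel₀ h2
        linear_combination hc'
      have hnZ : (n : ℤ) = c * M := by exact_mod_cast hnc
      exact hd (Int.natCast_dvd_natCast.mp ⟨c, by linarith⟩)
    have hζM : Complex.exp z ^ M = 1 := by
      rw [← Complex.exp_nat_mul]
      have : (M : ℂ) * z = n * (2 * Real.pi * Complex.I) := by
        rw [hz, mul_comm, div_mul_cancel₀ _ hM0]; ring
      rw [this]
      exact Complex.exp_nat_mul_two_pi_mul_I n
    rw [if_neg hd]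
    calc ∑ j ∈ Finset.Icc 1 M, Complex.exp (2 * Real.pi * Complex.I * n * j / M)
        = ∑ j ∈ Finset.range M, Complex.exp z ^ (1 + j) := by
          rw [← Finset.Ico_add_one_right_eq_Icc, Finset.sum_Ico_eq_sum_range]
          simp only [hterm, Nat.succ_sub_one, Nat.add_sub_cancel]
      _ = Complex.exp z * ∑ j ∈ Finset.range M, Complex.exp z ^ j := by
          simp [pow_add, Finset.mul_sum, pow_one]
      _ = 0 := by
          rw [geom_sum_eq hζ, hζM]
          simp

lemma ggcd_eq_one_iff {s k h : ℕ} (hs : 1 ≤ s) (hk : 0 < k) (hh : 1 ≤ h) :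
    ggcd s h (k ^ s) = 1 ↔ ∀ p ∈ k.primeFactors, ¬ p ^ s ∣ h := by
  unfold ggcd
  have hs0 : s ≠ 0 := Nat.one_le_iff_ne_zero.mp hs
  have hP1 : (fun d => d ^ s ∣ h ∧ d ^ s ∣ k ^ s) 1 := by simp
  have h1le : 1 ≤ max h (k ^ s) := le_trans hh (le_max_left _ _)
  constructor
  · intro h1 p hp hpd
    have hG : Nat.findGreatest (fun d => d ^ s ∣ h ∧ d ^ s ∣ k ^ s) (max h (k ^ s)) = 1 :=
      Nat.dvd_one.mp (h1 ▸ dvd_pow_self _ hs0)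
    have hpp : p.Prime := Nat.prime_of_mem_primeFactors hp
    have hpk : p ∣ k := Nat.dvd_of_mem_primeFactors hp
    have hple : p ≤ max h (k ^ s) := le_trans (le_trans (Nat.le_of_dvd hk hpk)
      (Nat.le_self_pow hs0 k)) (le_max_right _ _)
    have := Nat.le_findGreatest (P := fun d => d ^ s ∣ h ∧ d ^ s ∣ k ^ s) hple
      ⟨hpd, pow_dvd_pow_of_dvd hpk s⟩
    rw [hG] at this
    have := hpp.two_le
    omega
  · intro hyp
    have hG1 : 1 ≤ Nat.findGreatest (fun d => d ^ s ∣ h ∧ d ^ s ∣ k ^ s) (max h (k ^ s)) :=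
      Nat.le_findGreatest h1le hP1
    have hG2 : Nat.findGreatest (fun d => d ^ s ∣ h ∧ d ^ s ∣ k ^ s) (max h (k ^ s)) ≤ 1 := by
      by_contra hc
      push_neg at hc
      set G := Nat.findGreatest (fun d => d ^ s ∣ h ∧ d ^ s ∣ k ^ s) (max h (k ^ s)) with hGdef
      have hspec : G ^ s ∣ h ∧ G ^ s ∣ k ^ s := Nat.findGreatest_spec (P := fun d => d ^ s ∣ h ∧ d ^ s ∣ k ^ s) h1le hP1
      have hGk : G ∣ k := (Nat.pow_dvd_pow_iff hs0).mp hspec.2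
      have hG0 : G ≠ 1 := by omega
      have hpp : G.minFac.Prime := Nat.minFac_prime hG0
      have hmem : G.minFac ∈ k.primeFactors :=
        Nat.mem_primeFactors.mpr ⟨hpp, dvd_trans (Nat.minFac_dvd G) hGk, hk.ne'⟩
      exact hyp _ hmem (dvd_trans (pow_dvd_pow_of_dvd (Nat.minFac_dvd G) s) hspec.1)
    have : Nat.findGreatest (fun d => d ^ s ∣ h ∧ d ^ s ∣ k ^ s) (max h (k ^ s)) = 1 :=
      le_antisymm hG2 hG1
    rw [this, one_pow]
lemma prod_pow_dvd_iff {s : ℕ} (S : Finset ℕ) (hSp : ∀ p ∈ S, p.Prime) (h : ℕ) :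
    (∏ p ∈ S, p) ^ s ∣ h ↔ ∀ p ∈ S, p ^ s ∣ h := by
  constructor
  · intro hd p hp
    exact dvd_trans (pow_dvd_pow_of_dvd (Finset.dvd_prod_of_mem _ hp) s) hd
  · induction S using Finset.induction_on with
    | empty => simp
    | @insert a S ha ih =>
      intro hyp
      rw [Finset.prod_insert ha, mul_pow]
      have hap : a.Prime := hSp a (Finset.mem_insert_self a S)
      have hcop : Nat.Coprime (a ^ s) ((∏ p ∈ S, p) ^ s) := by
        apply Nat.Coprime.pow
        apply Nat.Coprime.prod_right
        intro p hp
        exact (Nat.coprime_primes hap (hSp p (Finset.mem_insert_of_mem hp))).mpr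
          (fun he => ha (he ▸ hp))
      exact Nat.Coprime.mul_dvd_of_dvd_of_dvd hcop
        (hyp a (Finset.mem_insert_self a S))
        (ih (fun p hp => hSp p (Finset.mem_insert_of_mem hp))
          (fun p hp => hyp p (Finset.mem_insert_of_mem hp)))
lemma CRS_inner_sum {s k : ℕ} (hs : 1 ≤ s) (hk : 0 < k) {d : ℕ} (hd : d ∣ k) (n : ℕ) :
    ∑ h ∈ Finset.Icc 1 (k ^ s),
        (if d ^ s ∣ h then Complex.exp (2 * Real.pi * Complex.I * n * h / (k ^ s)) else 0)
      = if (k / d) ^ s ∣ n then (((k / d) ^ s : ℕ) : ℂ) else 0 := by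
  have hdpos : 0 < d := Nat.pos_of_dvd_of_pos hd hk
  have hDpos : 0 < d ^ s := pow_pos hdpos s
  have hMpos : 0 < (k / d) ^ s := pow_pos (Nat.div_pos (Nat.le_of_dvd hk hd) hdpos) s
  set M := (k / d) ^ s with hM
  have hkey : k ^ s = d ^ s * M := by
    rw [hM, ← mul_pow, Nat.mul_div_cancel' hd]
  calc ∑ h ∈ Finset.Icc 1 (k ^ s),
        (if d ^ s ∣ h then Complex.exp (2 * Real.pi * Complex.I * n * h / (k ^ s)) else 0)
      = ∑ h ∈ (Finset.Icc 1 (k ^ s)).filter (fun h => d ^ s ∣ h),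
          Complex.exp (2 * Real.pi * Complex.I * n * h / (k ^ s)) :=
        (Finset.sum_filter _ _).symm
    _ = ∑ j ∈ Finset.Icc 1 M, Complex.exp (2 * Real.pi * Complex.I * n * j / M) := by
        refine Finset.sum_nbij' (fun h => h / d ^ s) (fun j => d ^ s * j) ?_ ?_ ?_ ?_ ?_
        · intro a haf
          obtain ⟨hai, hadvd⟩ := Finset.mem_filter.mp haf
          obtain ⟨ha1, ha2⟩ := Finset.mem_Icc.mp hai
          refine Finset.mem_Icc.mpr ⟨?_, ?_⟩
          · rw [Nat.one_le_div_iff hDpos]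
            exact Nat.le_of_dvd (by omega) hadvd
          · rw [hkey] at ha2
            calc a / d ^ s ≤ (d ^ s * M) / d ^ s := Nat.div_le_div_right ha2
              _ = M := Nat.mul_div_cancel_left M hDpos
        · intro j hj
          obtain ⟨hj1, hj2⟩ := Finset.mem_Icc.mp hj
          refine Finset.mem_filter.mpr ⟨Finset.mem_Icc.mpr ⟨?_, ?_⟩, dvd_mul_right _ _⟩
          · exact Nat.one_le_iff_ne_zero.mpr (by positivity)
          · rw [hkey]
            exact Nat.mul_le_mul_left _ hj2
        · intro a haf
          exact Nat.mul_div_cancel' (Finset.mem_filter.mp haf).2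
        · intro j hj
          exact Nat.mul_div_cancel_left j hDpos
        · intro a haf
          obtain ⟨hai, hadvd⟩ := Finset.mem_filter.mp haf
          obtain ⟨j, rfl⟩ := hadvd
          simp only [Nat.mul_div_cancel_left j hDpos]
          congr 1
          have hc : ((k : ℂ)) ^ s = (d : ℂ) ^ s * (M : ℂ) := by
            exact_mod_cast congrArg (fun t : ℕ => (t : ℂ)) hkey
          have hd0 : ((d : ℂ)) ^ s ≠ 0 := pow_ne_zero _ (Nat.cast_ne_zero.mpr hdpos.ne')
          have hM0 : (M : ℂ) ≠ 0 := Nat.cast_ne_zero.mpr hMpos.ne'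
          push_cast
          rw [hc]
          field_simp
    _ = if M ∣ n then ((M : ℕ) : ℂ) else 0 := geom_sum_exp M n hMpos

lemma indicator_key (s : ℕ) (hs : 1 ≤ s) (k : ℕ) (hk : 0 < k) (h : ℕ) (hh : 1 ≤ h) :
    (∑ T ∈ k.primeFactors.powerset,
        (-1 : ℂ) ^ T.card * (if (∏ p ∈ T, p) ^ s ∣ h then 1 else 0))
      = if ggcd s h (k ^ s) = 1 then 1 else 0 := by
  have hprimes : ∀ T ∈ k.primeFactors.powerset, ∀ p ∈ T, p.Prime := fun T hT p hp =>
    Nat.prime_of_mem_primeFactors (Finset.mem_powerset.mp hT hp)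
  calc (∑ T ∈ k.primeFactors.powerset,
        (-1 : ℂ) ^ T.card * (if (∏ p ∈ T, p) ^ s ∣ h then 1 else 0))
      = ∑ T ∈ k.primeFactors.powerset,
          (∏ p ∈ T, -(if p ^ s ∣ h then (1 : ℂ) else 0)) * ∏ p ∈ k.primeFactors \ T, 1 := by
        refine Finset.sum_congr rfl fun T hT => ?_
        rw [Finset.prod_const_one, mul_one]
        symm
        calc (∏ p ∈ T, -(if p ^ s ∣ h then (1 : ℂ) else 0))
            = ∏ p ∈ T, (-1 : ℂ) * (if p ^ s ∣ h then (1 : ℂ) else 0) := by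
              refine Finset.prod_congr rfl fun p _ => by ring
          _ = (-1 : ℂ) ^ T.card * ∏ p ∈ T, (if p ^ s ∣ h then (1 : ℂ) else 0) := by
              rw [Finset.prod_mul_distrib, Finset.prod_const]
          _ = (-1 : ℂ) ^ T.card * (if (∏ p ∈ T, p) ^ s ∣ h then 1 else 0) := by
              rw [Finset.prod_boole]
              simp only [← prod_pow_dvd_iff T (hprimes T hT) h]
    _ = ∏ p ∈ k.primeFactors, (-(if p ^ s ∣ h then (1 : ℂ) else 0) + 1) :=
        (Finset.prod_add _ _ _).symm
    _ = ∏ p ∈ k.primeFactors, (if ¬ p ^ s ∣ h then (1 : ℂ) else 0) := by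
        refine Finset.prod_congr rfl fun p _ => ?_
        by_cases hp : p ^ s ∣ h <;> simp [hp]
    _ = if ∀ p ∈ k.primeFactors, ¬ p ^ s ∣ h then 1 else 0 := Finset.prod_boole
    _ = if ggcd s h (k ^ s) = 1 then 1 else 0 := by
        simp only [ggcd_eq_one_iff hs hk hh]

lemma muCRS_eq_prod (s : ℕ) (hs : 1 ≤ s) (k : ℕ) (hk : 0 < k) (hksf : Squarefree k) (n : ℕ) :
    (μ k : ℂ) * CRS s k n
      = ∏ p ∈ k.primeFactors, (1 - (p : ℂ) ^ s * (if p ^ s ∣ n then 1 else 0)) := by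
  have hmu : (μ k : ℂ) = (-1) ^ k.primeFactors.card := by
    rw [ArithmeticFunction.moebius_apply_of_squarefree hksf]
    have hcard : k.primeFactors.card = ArithmeticFunction.cardFactors k := by
      rw [ArithmeticFunction.cardFactors_apply, ← Nat.toFinset_factors, List.card_toFinset,
        List.Nodup.dedup ((Nat.squarefree_iff_nodup_primeFactorsList hk.ne').mp hksf)]
    rw [← hcard]
    push_cast
    ring
  have hCRS : CRS s k n = ∑ T ∈ k.primeFactors.powerset, (-1 : ℂ) ^ T.card *
      (if (k / ∏ p ∈ T, p) ^ s ∣ n then (((k / ∏ p ∈ T, p) ^ s : ℕ) : ℂ) else 0) := by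
    calc CRS s k n
        = ∑ h ∈ Finset.Icc 1 (k ^ s), (∑ T ∈ k.primeFactors.powerset,
            (-1 : ℂ) ^ T.card * (if (∏ p ∈ T, p) ^ s ∣ h then 1 else 0)) *
            Complex.exp (2 * Real.pi * Complex.I * n * h / (k ^ s)) := by
          unfold CRS
          refine Finset.sum_congr rfl fun h hh => ?_
          rw [indicator_key s hs k hk h (Finset.mem_Icc.mp hh).1, ite_mul, one_mul, zero_mul]
      _ = ∑ T ∈ k.primeFactors.powerset, (-1 : ℂ) ^ T.card *
            ∑ h ∈ Finset.Icc 1 (k ^ s), (if (∏ p ∈ T, p) ^ s ∣ h then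
              Complex.exp (2 * Real.pi * Complex.I * n * h / (k ^ s)) else 0) := by
          simp only [Finset.sum_mul]
          rw [Finset.sum_comm]
          refine Finset.sum_congr rfl fun T _ => ?_
          rw [Finset.mul_sum]
          refine Finset.sum_congr rfl fun h _ => ?_
          rw [mul_assoc, ite_mul, one_mul, zero_mul]
      _ = ∑ T ∈ k.primeFactors.powerset, (-1 : ℂ) ^ T.card *
            (if (k / ∏ p ∈ T, p) ^ s ∣ n then (((k / ∏ p ∈ T, p) ^ s : ℕ) : ℂ) else 0) := by
          refine Finset.sum_congr rfl fun T hT => ?_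
          congr 1
          have hTd : (∏ p ∈ T, p) ∣ k := by
            refine dvd_trans (Finset.prod_dvd_prod_of_subset _ _ _ (Finset.mem_powerset.mp hT)) ?_
            rw [Nat.prod_primeFactors_of_squarefree hksf]
          exact CRS_inner_sum hs hk hTd n
  rw [hCRS, Finset.mul_sum]
  -- expand RHS product
  have hexp : ∏ p ∈ k.primeFactors, (1 - (p : ℂ) ^ s * (if p ^ s ∣ n then 1 else 0))
      = ∑ S ∈ k.primeFactors.powerset, (-1 : ℂ) ^ S.card *
          (if (∏ p ∈ S, p) ^ s ∣ n then (((∏ p ∈ S, p) ^ s : ℕ) : ℂ) else 0) := by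
    calc ∏ p ∈ k.primeFactors, (1 - (p : ℂ) ^ s * (if p ^ s ∣ n then 1 else 0))
        = ∏ p ∈ k.primeFactors, (-( (p : ℂ) ^ s * (if p ^ s ∣ n then 1 else 0)) + 1) := by
          refine Finset.prod_congr rfl fun p _ => by ring
      _ = ∑ S ∈ k.primeFactors.powerset,
            (∏ p ∈ S, -((p : ℂ) ^ s * (if p ^ s ∣ n then 1 else 0))) *
              ∏ p ∈ k.primeFactors \ S, 1 := Finset.prod_add _ _ _
      _ = ∑ S ∈ k.primeFactors.powerset, (-1 : ℂ) ^ S.card *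
            (if (∏ p ∈ S, p) ^ s ∣ n then (((∏ p ∈ S, p) ^ s : ℕ) : ℂ) else 0) := by
          refine Finset.sum_congr rfl fun S hS => ?_
          rw [Finset.prod_const_one, mul_one]
          have hSp : ∀ p ∈ S, p.Prime := fun p hp =>
            Nat.prime_of_mem_primeFactors (Finset.mem_powerset.mp hS hp)
          calc (∏ p ∈ S, -((p : ℂ) ^ s * (if p ^ s ∣ n then 1 else 0)))
              = ∏ p ∈ S, ((-1 : ℂ) * ((p : ℂ) ^ s * (if p ^ s ∣ n then 1 else 0))) := by
                refine Finset.prod_congr rfl fun p _ => by ring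
            _ = (-1 : ℂ) ^ S.card * ((∏ p ∈ S, (p : ℂ) ^ s) *
                  ∏ p ∈ S, (if p ^ s ∣ n then (1 : ℂ) else 0)) := by
                rw [Finset.prod_mul_distrib, Finset.prod_mul_distrib, Finset.prod_const]
            _ = (-1 : ℂ) ^ S.card *
                  (if (∏ p ∈ S, p) ^ s ∣ n then (((∏ p ∈ S, p) ^ s : ℕ) : ℂ) else 0) := by
                have hcast : (∏ p ∈ S, (p : ℂ) ^ s) = (((∏ p ∈ S, p) ^ s : ℕ) : ℂ) := by
                  push_cast
                  rw [Finset.prod_pow]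
                rw [Finset.prod_boole]
                simp only [← prod_pow_dvd_iff S hSp n]
                rw [hcast, mul_ite, mul_one, mul_zero]
  rw [hexp]
  -- reindex T ↦ primeFactors \ T
  refine Finset.sum_nbij' (fun T => k.primeFactors \ T) (fun S => k.primeFactors \ S)
    (fun T _ => Finset.mem_powerset.mpr (Finset.sdiff_subset)) 
    (fun S _ => Finset.mem_powerset.mpr (Finset.sdiff_subset)) 
    (fun T hT => Finset.sdiff_sdiff_eq_self (Finset.mem_powerset.mp hT))
    (fun S hS => Finset.sdiff_sdiff_eq_self (Finset.mem_powerset.mp hS)) ?_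
  intro T hT
  have hTsub : T ⊆ k.primeFactors := Finset.mem_powerset.mp hT
  have hprod : (∏ p ∈ T, p) * (∏ p ∈ k.primeFactors \ T, p) = k := by
    rw [mul_comm, Finset.prod_sdiff hTsub, Nat.prod_primeFactors_of_squarefree hksf]
  have hTpos : 0 < ∏ p ∈ T, p :=
    Finset.prod_pos fun p hp => (Nat.prime_of_mem_primeFactors (hTsub hp)).pos
  have hdiv : k / ∏ p ∈ T, p = ∏ p ∈ k.primeFactors \ T, p :=
    Nat.div_eq_of_eq_mul_right hTpos hprod.symm
  have hsign : (μ k : ℂ) * (-1) ^ T.card = (-1) ^ (k.primeFactors \ T).card := by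
    rw [hmu]
    have hcard : (k.primeFactors \ T).card + T.card = k.primeFactors.card :=
      Finset.card_sdiff_add_card_eq_card hTsub
    rw [← hcard, pow_add, mul_assoc, ← mul_pow]
    norm_num
  rw [hdiv, ← mul_assoc, hsign]

lemma factor_mult {s : ℕ} (hs : 1 ≤ s) {p m n : ℕ} (hp : p.Prime) (hcop : Nat.Coprime m n) :
    (1 - (p : ℂ) ^ s * (if p ^ s ∣ m * n then 1 else 0)) =
      (1 - (p : ℂ) ^ s * (if p ^ s ∣ m then 1 else 0)) *
        (1 - (p : ℂ) ^ s * (if p ^ s ∣ n then 1 else 0)) := by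
  have hs0 : s ≠ 0 := Nat.one_le_iff_ne_zero.mp hs
  by_cases hpm : p ∣ m <;> by_cases hpn : p ∣ n
  · exfalso
    have := Nat.eq_one_of_dvd_one (hcop ▸ Nat.dvd_gcd hpm hpn)
    exact hp.one_lt.ne' this
  · have hpsn : ¬ p ^ s ∣ n := fun hd => hpn (dvd_trans (dvd_pow_self p hs0) hd)
    have hiff : p ^ s ∣ m * n ↔ p ^ s ∣ m := by
      constructor
      · intro hd
        exact (Nat.Coprime.pow_left s ((Nat.Prime.coprime_iff_not_dvd hp).mpr hpn)).dvd_of_dvd_mul_right hd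
      · exact fun hd => dvd_mul_of_dvd_left hd n
    by_cases hdm : p ^ s ∣ m <;> simp [hiff, hdm, hpsn]
  · have hpsm : ¬ p ^ s ∣ m := fun hd => hpm (dvd_trans (dvd_pow_self p hs0) hd)
    have hiff : p ^ s ∣ m * n ↔ p ^ s ∣ n := by
      constructor
      · intro hd
        exact (Nat.Coprime.pow_left s ((Nat.Prime.coprime_iff_not_dvd hp).mpr hpm)).dvd_of_dvd_mul_left hd
      · exact fun hd => dvd_mul_of_dvd_right hd m
    by_cases hdn : p ^ s ∣ n <;> simp [hiff, hdn, hpsm]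
  · have hpsm : ¬ p ^ s ∣ m := fun hd => hpm (dvd_trans (dvd_pow_self p hs0) hd)
    have hpsn : ¬ p ^ s ∣ n := fun hd => hpn (dvd_trans (dvd_pow_self p hs0) hd)
    have hmn : ¬ p ^ s ∣ m * n := by
      intro hd
      exact hpsm ((Nat.Coprime.pow_left s ((Nat.Prime.coprime_iff_not_dvd hp).mpr hpn)).dvd_of_dvd_mul_right hd)
    simp [hpsm, hpsn, hmn]


/-- For squarefree `k` and coprime `m, n`, the function `n ↦ μ(k)·c_k^{(s)}(n)` is
multiplicative: `μ(k)·c_k^{(s)}(mn) = (μ(k)·c_k^{(s)}(m)) · (μ(k)·c_k^{(s)}(n))`. -/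
theorem moebius_CRS_multiplicative (s : ℕ) (hs : 1 ≤ s) (k : ℕ) (hk : 0 < k)
    (hksf : Squarefree k) (m n : ℕ) (hm : 0 < m) (hn : 0 < n)
    (hcop : Nat.Coprime m n) :
    (μ k : ℂ) * CRS s k (m * n) =
      ((μ k : ℂ) * CRS s k m) * ((μ k : ℂ) * CRS s k n) := by
  rw [muCRS_eq_prod s hs k hk hksf, muCRS_eq_prod s hs k hk hksf,
    muCRS_eq_prod s hs k hk hksf, ← Finset.prod_mul_distrib]
  exact Finset.prod_congr rfl fun p hp =>
    factor_mult hs (Nat.prime_of_mem_primeFactors hp) hcop
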